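/- Let F > 0, h > 0, and consider the scalar implicit Euler step for ż ∈ −F·sgn(z): z_{k+1} ∈ z_k − hF·sgn(z_{k+1}). Its unique solution is z_{k+1} = z_k − proj_{[−hF,hF]}(z_k); consequently, if |z_k| ≤ hF then z_{k+1} = 0, and otherwise |z_{k+1}| = |z_k| − hF < |z_k|. In particular z_k reaches exactly 0 after at most ⌈|z₀|/(hF)⌉ steps and stays at 0 thereafter. -/
import Mathlib


/-- Set-valued signum: `{1}` if positive, `{-1}` if negative, `[-1,1]` at zero. -/
noncomputable def sgnSet (w : ℝ) : Set ℝ :=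
  if 0 < w then {1} else if w < 0 then {-1} else Set.Icc (-1) 1

/-- Projection onto the closed interval `[c,d]` (for `c ≤ d`): `max c (min d x)`. -/
noncomputable def proj (c d x : ℝ) : ℝ := max c (min d x)

theorem stmt_10 (F h : ℝ) (hF : 0 < F) (hh : 0 < h)
    (z : ℕ → ℝ) (hz : ∀ k, z (k+1) = z k - proj (-(h*F)) (h*F) (z k)) :
    (∀ k, (∃ s ∈ sgnSet (z (k+1)), z (k+1) = z k - h * F * s) ∧
      (∀ w, (∃ s ∈ sgnSet w, w = z k - h * F * s) → w = z (k+1))) ∧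
    (∀ k, (|z k| ≤ h * F → z (k+1) = 0) ∧
      (h * F < |z k| → |z (k+1)| = |z k| - h * F ∧ |z (k+1)| < |z k|)) ∧
    (∀ k, ⌈|z 0| / (h * F)⌉₊ ≤ k → z k = 0) := by
  set c := h * F with hc
  have hcpos : 0 < c := mul_pos hh hF
  have hcne : c ≠ 0 := ne_of_gt hcpos
  -- explicit step values
  have hsmall : ∀ k, |z k| ≤ c → z (k+1) = 0 := by
    intro k hle
    rw [abs_le] at hle
    rw [hz k, proj, min_eq_right hle.2, max_eq_right hle.1, sub_self]
  have hposstep : ∀ k, c < z k → z (k+1) = z k - c := by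
    intro k hgt
    rw [hz k, proj, min_eq_left hgt.le, max_eq_right (by linarith)]
  have hnegstep : ∀ k, z k < -c → z (k+1) = z k + c := by
    intro k hlt
    rw [hz k, proj, min_eq_right (by linarith), max_eq_left hlt.le]
    ring
  have key : ∀ k, (|z k| ≤ c → z (k+1) = 0) ∧
      (c < |z k| → |z (k+1)| = |z k| - c ∧ |z (k+1)| < |z k|) := by
    intro k
    refine ⟨hsmall k, fun hgt => ?_⟩
    rcases abs_cases (z k) with ⟨he, hpos⟩ | ⟨he, hneg⟩
    · have h1 : c < z k := by rwa [he] at hgt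
      have h2 : z (k+1) = z k - c := hposstep k h1
      constructor
      · rw [h2, abs_of_pos (by linarith), he]
      · rw [h2, abs_of_pos (by linarith), he]; linarith
    · have h1 : z k < -c := by rw [he] at hgt; linarith
      have h2 : z (k+1) = z k + c := hnegstep k h1
      constructor
      · rw [h2, abs_of_neg (by linarith), he]; ring
      · rw [h2, abs_of_neg (by linarith), he]; linarith
  refine ⟨?_, key, ?_⟩
  · intro k
    constructor
    · -- existence
      by_cases hle : |z k| ≤ c
      · refine ⟨z k / c, ?_, ?_⟩
        · rw [hsmall k hle, sgnSet]
          simp only [lt_irrefl, if_false, Set.mem_Icc]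
          constructor
          · rw [neg_le, ← neg_div]
            exact (div_le_one hcpos).2 (by have := neg_abs_le (z k); linarith)
          · exact (div_le_one hcpos).2 ((le_abs_self _).trans hle)
        · rw [hsmall k hle, mul_div_cancel₀ _ hcne, sub_self]
      · push_neg at hle
        rcases abs_cases (z k) with ⟨he, hpos⟩ | ⟨he, hneg⟩
        · have h1 : c < z k := by rwa [he] at hle
          refine ⟨1, ?_, by rw [hposstep k h1, mul_one]⟩
          rw [hposstep k h1, sgnSet, if_pos (by linarith)]
          rfl
        · have h1 : z k < -c := by rw [he] at hle; linarith
          refine ⟨-1, ?_, by rw [hnegstep k h1]; ring⟩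
          rw [hnegstep k h1, sgnSet, if_neg (by linarith), if_pos (by linarith)]
          rfl
    · -- uniqueness
      rintro w ⟨s, hs, hw⟩
      rw [sgnSet] at hs
      by_cases hwpos : 0 < w
      · rw [if_pos hwpos] at hs
        rw [Set.mem_singleton_iff] at hs
        subst hs
        rw [mul_one] at hw
        have h1 : c < z k := by linarith [hwpos, hw.symm ▸ hwpos]
        rw [hposstep k (by linarith [hw ▸ hwpos])]
        linarith [hw]
      · rw [if_neg hwpos] at hs
        by_cases hwneg : w < 0
        · rw [if_pos hwneg, Set.mem_singleton_iff] at hs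
          subst hs
          have hw' : w = z k + c := by rw [hw]; ring
          have h1 : z k < -c := by linarith
          rw [hnegstep k h1]; linarith
        · rw [if_neg hwneg, Set.mem_Icc] at hs
          have hw0 : w = 0 := le_antisymm (not_lt.1 hwpos) (not_lt.1 hwneg)
          have hzk : z k = c * s := by linarith [hw]
          have habs : |z k| ≤ c := by
            rw [hzk, abs_mul, abs_of_pos hcpos]
            have hsabs : |s| ≤ 1 := abs_le.2 hs
            nlinarith [abs_nonneg s]
          rw [hw0, hsmall k habs]
  · -- finite-time convergence
    have hstay : ∀ k, z k = 0 → z (k+1) = 0 := by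
      intro k hk
      apply hsmall
      rw [hk, abs_zero]; linarith
    have hdec : ∀ k, z k = 0 ∨ |z k| ≤ |z 0| - k * c := by
      intro k
      induction k with
      | zero => right; simp
      | succ n ih =>
        rcases ih with h0 | hle
        · left; exact hstay n h0
        · by_cases hle2 : |z n| ≤ c
          · left; exact hsmall n hle2
          · right
            push_neg at hle2
            have := (key n).2 hle2
            push_cast
            rw [this.1]
            push_cast at hle
            linarith
    intro k hk
    have h1 : |z 0| / c ≤ k := by
      calc |z 0| / c ≤ (⌈|z 0| / c⌉₊ : ℝ) := Nat.le_ceil _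
        _ ≤ k := by exact_mod_cast hk
    have h2 : |z 0| ≤ k * c := by
      rw [div_le_iff₀ hcpos] at h1
      linarith
    rcases hdec k with h0 | hle
    · exact h0
    · have : |z k| ≤ 0 := by linarith
      exact abs_eq_zero.1 (le_antisymm this (abs_nonneg _))
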